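/- arXiv:math/0510678 — 8 statements merged into one kernel-verified Lean document; each statement's English description precedes it below -/
import Mathlib

section
/- Let X, Y be normed linear spaces, K ⊆ X a convex cone with non-empty interior, and H : X → Y a K-monotone dominated mapping with dominating function h : X → ℝ. If h is continuous at a point x ∈ X, then H is continuous at x. -/
theorem stmt_2 {X Y : Type*} [NormedAddCommGroup X] [NormedSpace ℝ X]
    [NormedAddCommGroup Y] [NormedSpace ℝ Y]
    (K : Set X) (hK : ∀ (c : ℝ) (x : X), 0 ≤ c → x ∈ K → c • x ∈ K)
    (hKconv : Convex ℝ K) (hKint : (interior K).Nonempty)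
    (H : X → Y) (h : X → ℝ)
    (hdom : ∀ x : X, ∀ k ∈ K, ‖H (x + k) - H x‖ ≤ h (x + k) - h x)
    (x : X) (hcont : ContinuousAt h x) : ContinuousAt H x := by
  obtain ⟨k₀, hk₀⟩ := hKint
  obtain ⟨r, rpos, hball⟩ := Metric.isOpen_iff.1 isOpen_interior k₀ hk₀
  have hballK : Metric.ball k₀ r ⊆ K := hball.trans interior_subset
  rw [Metric.continuousAt_iff] at hcont ⊢
  intro ε εpos
  obtain ⟨δ, δpos, hδ⟩ := hcont (ε / 4) (by linarith)
  have hden : (0:ℝ) < ‖k₀‖ + r := by positivity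
  set t : ℝ := δ / (2 * (‖k₀‖ + r)) with ht
  have tpos : 0 < t := by positivity
  have htsum : t * (‖k₀‖ + r) = δ / 2 := by
    field_simp [ht]
    linear_combination (div_mul_cancel₀ δ (ne_of_gt (by positivity : (0:ℝ) < 2 * (‖k₀‖ + r))) : t * (2 * (‖k₀‖ + r)) = δ)
  refine ⟨min (t * r) (δ / 2), by positivity, ?_⟩
  intro x' hx'
  set u : X := x' - x with hu
  have hux : x' = x + u := by simp [hu]
  have hu1 : ‖u‖ < t * r := lt_of_lt_of_le (by simpa [dist_eq_norm, hu] using hx') (min_le_left _ _)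
  have hu2 : ‖u‖ < δ / 2 := lt_of_lt_of_le (by simpa [dist_eq_norm, hu] using hx') (min_le_right _ _)
  set k₁ : X := k₀ + t⁻¹ • u with hk₁
  have hk₁K : k₁ ∈ K := by
    apply hballK
    rw [Metric.mem_ball, dist_eq_norm]
    have : ‖k₁ - k₀‖ = ‖u‖ / t := by
      rw [hk₁]
      simp [norm_smul, abs_of_pos tpos, div_eq_inv_mul]
    rw [this]
    rw [div_lt_iff₀ tpos]
    linarith [hu1]
  have htk₁ : t • k₁ ∈ K := hK t k₁ tpos.le hk₁K
  have htk₀ : t • k₀ ∈ K := hK t k₀ tpos.le (interior_subset hk₀)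
  set z : X := x' + t • k₀ with hz
  have hz2 : z = x + t • k₁ := by
    rw [hz, hk₁, hux, smul_add, smul_inv_smul₀ tpos.ne']
    abel
  -- distance estimates
  have htk₀norm : t * ‖k₀‖ ≤ δ / 2 := by
    calc t * ‖k₀‖ ≤ t * (‖k₀‖ + r) := by nlinarith
    _ = δ / 2 := htsum
  have hzx : dist z x < δ := by
    rw [hz, hux, dist_eq_norm]
    have : x + u + t • k₀ - x = u + t • k₀ := by abel
    rw [this]
    calc ‖u + t • k₀‖ ≤ ‖u‖ + ‖t • k₀‖ := norm_add_le _ _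
      _ = ‖u‖ + t * ‖k₀‖ := by rw [norm_smul, Real.norm_of_nonneg tpos.le]
      _ < δ := by linarith
  have hx'x : dist x' x < δ := by
    rw [dist_eq_norm, ← hu]
    linarith
  have H1 : ‖H z - H x'‖ ≤ h z - h x' := by
    have := hdom x' (t • k₀) htk₀
    rwa [← hz] at this
  have H2 : ‖H z - H x‖ ≤ h z - h x := by
    have := hdom x (t • k₁) htk₁
    rwa [← hz2] at this
  have e1 : |h z - h x| < ε / 4 := by
    have := hδ hzx
    rwa [Real.dist_eq] at this
  have e2 : |h x' - h x| < ε / 4 := by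
    have := hδ hx'x
    rwa [Real.dist_eq] at this
  rw [dist_eq_norm]
  calc ‖H x' - H x‖ ≤ ‖H z - H x'‖ + ‖H z - H x‖ := by
        have : H x' - H x = -(H z - H x') + (H z - H x) := by abel
        rw [this]
        exact (norm_add_le _ _).trans (by rw [norm_neg])
    _ ≤ (h z - h x') + (h z - h x) := by linarith
    _ < ε := by
        have a1 := abs_lt.1 e1
        have a2 := abs_lt.1 e2
        linarith [a1.1, a1.2, a2.1, a2.2]
end

section
/- Let X, Y be normed linear spaces, K ⊆ X a convex cone with non-empty interior, and H : X → Y a K-monotone dominated mapping with dominating function h. If h is pointwise-Lipschitz at x ∈ X (i.e., limsup_{t→x} |h(t)−h(x)|/∥t−x∥ < ∞), then H is pointwise-Lipschitz at x (i.e., limsup_{t→x} ∥H(t)−H(x)∥/∥t−x∥ < ∞). -/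
open Filter

theorem stmt_3 {X Y : Type*} [NormedAddCommGroup X] [NormedSpace ℝ X]
    [NormedAddCommGroup Y] [NormedSpace ℝ Y]
    (K : Set X) (hK : ∀ (c : ℝ) (x : X), 0 ≤ c → x ∈ K → c • x ∈ K)
    (hKconv : Convex ℝ K) (hKint : (interior K).Nonempty)
    (H : X → Y) (h : X → ℝ)
    (hdom : ∀ x : X, ∀ k ∈ K, ‖H (x + k) - H x‖ ≤ h (x + k) - h x)
    (x : X)
    (hlip : limsup (fun t => ENNReal.ofReal (|h t - h x| / ‖t - x‖)) (nhdsWithin x {x}ᶜ) < ⊤) :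
    limsup (fun t => ENNReal.ofReal (‖H t - H x‖ / ‖t - x‖)) (nhdsWithin x {x}ᶜ) < ⊤ := by
  -- extract a real Lipschitz-type bound C for h near x
  obtain ⟨b, hb1, hb2⟩ := exists_between hlip
  have hev := Filter.eventually_lt_of_limsup_lt hb1
  set C : ℝ := b.toReal with hCdef
  have hC0 : 0 ≤ C := ENNReal.toReal_nonneg
  have hCnhds : ∀ᶠ t in nhds x, |h t - h x| ≤ C * ‖t - x‖ := by
    rw [show nhdsWithin x {x}ᶜ = nhdsWithin x {x}ᶜ from rfl] at hev
    have hev' : ∀ᶠ t in nhds x, t ∈ ({x}ᶜ : Set X) →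
        ENNReal.ofReal (|h t - h x| / ‖t - x‖) < b := by
      rwa [← eventually_nhdsWithin_iff]
    filter_upwards [hev'] with t ht
    by_cases htx : t = x
    · simp [htx]
    · have ht' := ht (by simpa using htx)
      have hle : |h t - h x| / ‖t - x‖ ≤ C := by
        have := le_of_lt ht'
        rwa [ENNReal.ofReal_le_iff_le_toReal hb2.ne] at this
      have hpos : 0 < ‖t - x‖ := by
        rw [norm_pos_iff]
        exact sub_ne_zero_of_ne htx
      calc |h t - h x| = (|h t - h x| / ‖t - x‖) * ‖t - x‖ := by
            field_simp
        _ ≤ C * ‖t - x‖ := by gcongr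
  obtain ⟨ε, εpos, hε⟩ := Metric.eventually_nhds_iff.mp hCnhds
  -- geometry: interior point
  obtain ⟨k₀, hk₀int⟩ := hKint
  obtain ⟨r, r0, hball⟩ := Metric.isOpen_iff.mp isOpen_interior k₀ hk₀int
  have hballK : Metric.ball k₀ r ⊆ K := hball.trans interior_subset
  have hk₀K : k₀ ∈ K := hballK (Metric.mem_ball_self r0)
  set c : ℝ := 2 / r with hc
  have hcpos : 0 < c := by positivity
  set A : ℝ := 1 + c * ‖k₀‖ with hA
  have hA1 : 1 ≤ A := by
    have : 0 ≤ c * ‖k₀‖ := by positivity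
    linarith
  have hApos : 0 < A := lt_of_lt_of_le one_pos hA1
  set M : ℝ := C * (2 * A + 1) with hM
  refine lt_of_le_of_lt (Filter.limsup_le_of_le (by isBoundedDefault) ?_)
    (ENNReal.ofReal_lt_top : ENNReal.ofReal M < ⊤)
  rw [eventually_nhdsWithin_iff]
  rw [Metric.eventually_nhds_iff]
  refine ⟨ε / A, by positivity, fun t hdist htmem => ?_⟩
  have htx : t ≠ x := by simpa using htmem
  set u : X := t - x with hu
  have hupos : 0 < ‖u‖ := by rw [norm_pos_iff]; exact sub_ne_zero_of_ne htx
  rw [dist_eq_norm] at hdist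
  set k : X := u + (c * ‖u‖) • k₀ with hk'
  set m : X := (c * ‖u‖) • k₀ with hm'
  have hnormk : ‖k‖ ≤ A * ‖u‖ := by
    calc ‖k‖ ≤ ‖u‖ + ‖(c * ‖u‖) • k₀‖ := norm_add_le _ _
      _ = ‖u‖ + c * ‖u‖ * ‖k₀‖ := by
          rw [norm_smul, Real.norm_of_nonneg (by positivity)]
      _ = A * ‖u‖ := by ring
  have hkK : k ∈ K := by
    set s : ℝ := r / (2 * ‖u‖) with hs
    have hspos : 0 < s := by positivity
    have hsk : s • k ∈ K := by
      apply hballK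
      have : s • k = s • u + k₀ := by
        rw [hk', smul_add, smul_smul]
        have : s * (c * ‖u‖) = 1 := by
          rw [hs, hc]; field_simp
        rw [this, one_smul]
      rw [Metric.mem_ball, this, dist_eq_norm, add_sub_cancel_right, norm_smul,
        Real.norm_of_nonneg hspos.le]
      calc s * ‖u‖ = r / 2 := by rw [hs]; field_simp
        _ < r := by linarith
    have : s⁻¹ • (s • k) ∈ K := hK s⁻¹ _ (by positivity) hsk
    rwa [smul_smul, inv_mul_cancel₀ hspos.ne', one_smul] at this
  have hmK : m ∈ K := hK _ _ (by positivity) hk₀K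
  -- the two domination inequalities
  have h1 : ‖H (x + k) - H x‖ ≤ h (x + k) - h x := hdom x k hkK
  have h2 : ‖H (t + m) - H t‖ ≤ h (t + m) - h t := hdom t m hmK
  have htm : t + m = x + k := by
    rw [hk', hm', hu]; abel
  rw [htm] at h2
  -- h bounds
  have hub : ‖u‖ < ε := lt_of_lt_of_le hdist (div_le_self εpos.le hA1)
  have hkb : ‖k‖ < ε := by
    calc ‖k‖ ≤ A * ‖u‖ := hnormk
      _ < A * (ε / A) := by gcongr
      _ = ε := by field_simp
  have hbt : |h t - h x| ≤ C * ‖u‖ := by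
    have := hε (y := t) (by rw [dist_eq_norm]; exact hub)
    simpa [hu] using this
  have hbk : |h (x + k) - h x| ≤ C * (A * ‖u‖) := by
    have := hε (y := x + k) (by rw [dist_eq_norm, add_sub_cancel_left]; exact hkb)
    rw [add_sub_cancel_left] at this
    calc |h (x + k) - h x| ≤ C * ‖k‖ := this
      _ ≤ C * (A * ‖u‖) := by gcongr
  -- combine
  have hmain : ‖H t - H x‖ ≤ M * ‖u‖ := by
    have key : ‖H t - H x‖ ≤ ‖H (x + k) - H x‖ + ‖H (x + k) - H t‖ := by
      have : H t - H x = (H (x + k) - H x) - (H (x + k) - H t) := by abel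
      rw [this]
      exact norm_sub_le _ _
    have e1 : h (x + k) - h x ≤ C * (A * ‖u‖) := le_trans (le_abs_self _) hbk
    have e2 : h (x + k) - h t ≤ C * (A * ‖u‖) + C * ‖u‖ := by
      have : h (x + k) - h t = (h (x + k) - h x) - (h t - h x) := by ring
      rw [this]
      have : -(h t - h x) ≤ |h t - h x| := neg_le_abs _
      linarith [le_trans (le_abs_self _) hbk, le_trans this hbt]
    calc ‖H t - H x‖ ≤ ‖H (x + k) - H x‖ + ‖H (x + k) - H t‖ := key
      _ ≤ (h (x + k) - h x) + (h (x + k) - h t) := add_le_add h1 h2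
      _ ≤ C * (A * ‖u‖) + (C * (A * ‖u‖) + C * ‖u‖) := add_le_add e1 e2
      _ = M * ‖u‖ := by rw [hM]; ring
  apply ENNReal.ofReal_le_ofReal
  rw [div_le_iff₀ hupos]
  simpa [hu] using hmain
end

section
/- Let X be a normed linear space, K ⊆ X a closed convex cone with non-empty interior, and f : X → ℝ a K-increasing function. If f is Gâteaux differentiable at x ∈ X, then f is pointwise-Lipschitz at x. -/
open Filter

theorem stmt_5 {X : Type*} [NormedAddCommGroup X] [NormedSpace ℝ X]
    (K : Set X) (hK : ∀ (c : ℝ) (x : X), 0 ≤ c → x ∈ K → c • x ∈ K)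
    (hKconv : Convex ℝ K) (hKcl : IsClosed K) (hKint : (interior K).Nonempty)
    (f : X → ℝ) (hmono : ∀ x y : X, y - x ∈ K → f x ≤ f y)
    (x : X)
    (hgat : ∃ T : X →L[ℝ] ℝ, ∀ v : X,
      Tendsto (fun t : ℝ => (f (x + t • v) - f x) / t) (nhdsWithin 0 {(0:ℝ)}ᶜ) (nhds (T v))) :
    limsup (fun t => ENNReal.ofReal (|f t - f x| / ‖t - x‖)) (nhdsWithin x {x}ᶜ) < ⊤ := by
  obtain ⟨T, hT⟩ := hgat
  obtain ⟨e, he⟩ := hKint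
  obtain ⟨r, hr, hball⟩ := Metric.isOpen_iff.1 isOpen_interior e he
  have hrK : Metric.closedBall e (r / 2) ⊆ K := fun z hz => by
    have : z ∈ Metric.ball e r := by
      rw [Metric.mem_closedBall] at hz
      rw [Metric.mem_ball]
      linarith
    exact interior_subset (hball this)
  -- key cone membership
  have key : ∀ h : X, h ≠ 0 → ((2 * ‖h‖ / r) • e - h ∈ K ∧ (2 * ‖h‖ / r) • e + h ∈ K) := by
    intro h hh
    have hn : 0 < ‖h‖ := norm_pos_iff.2 hh
    set t : ℝ := 2 * ‖h‖ / r with ht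
    have htpos : 0 < t := by positivity
    have hmem : ∀ s : X, ‖s‖ = ‖h‖ → t • e - s ∈ K := by
      intro s hs
      have h1 : e - (1 / t) • s ∈ Metric.closedBall e (r / 2) := by
        rw [Metric.mem_closedBall, dist_eq_norm]
        rw [show e - (1 / t) • s - e = -((1 / t) • s) from by abel, norm_neg, norm_smul, hs]
        rw [Real.norm_eq_abs, abs_of_pos (by positivity)]
        rw [ht]
        field_simp
        exact le_rfl
      have h2 := hK t _ htpos.le (hrK h1)
      have h3 : t • (e - (1 / t) • s) = t • e - s := by
        rw [smul_sub, smul_smul]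
        congr 1
        rw [mul_one_div, div_self htpos.ne']
        simp
      rwa [h3] at h2
    constructor
    · exact hmem h rfl
    · have := hmem (-h) (by simp)
      simpa [sub_neg_eq_add] using this
  -- bounds from Gateaux differentiability
  have bound : ∀ v : X, ∀ᶠ t in nhdsWithin (0:ℝ) {(0:ℝ)}ᶜ,
      |f (x + t • v) - f x| ≤ (|T v| + 1) * |t| := by
    intro v
    have h1 := (hT v).eventually (Metric.ball_mem_nhds (T v) one_pos)
    filter_upwards [h1, self_mem_nhdsWithin] with t hball' ht
    have ht0 : t ≠ 0 := ht
    rw [Real.dist_eq] at hball'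
    have : |(f (x + t • v) - f x) / t| ≤ |T v| + 1 := by
      have := abs_sub_abs_le_abs_sub ((f (x + t • v) - f x) / t) (T v)
      linarith
    calc |f (x + t • v) - f x| = |(f (x + t • v) - f x) / t| * |t| := by
          rw [← abs_mul, div_mul_cancel₀ _ ht0]
      _ ≤ (|T v| + 1) * |t| := by
          apply mul_le_mul_of_nonneg_right this (abs_nonneg t)
  set M : ℝ := |T e| + |T (-e)| + 1 with hM
  have hMpos : 0 < M := by positivity
  have hMe : |T e| + 1 ≤ M := by rw [hM]; linarith [abs_nonneg (T (-e))]
  have hMne : |T (-e)| + 1 ≤ M := by rw [hM]; linarith [abs_nonneg (T e)]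
  -- get a δ from the two eventual bounds
  have hev : ∀ᶠ t in nhdsWithin (0:ℝ) {(0:ℝ)}ᶜ,
      |f (x + t • e) - f x| ≤ M * |t| ∧ |f (x + t • (-e)) - f x| ≤ M * |t| := by
    filter_upwards [bound e, bound (-e)] with t h1 h2
    constructor
    · exact h1.trans (mul_le_mul_of_nonneg_right hMe (abs_nonneg t))
    · exact h2.trans (mul_le_mul_of_nonneg_right hMne (abs_nonneg t))
  rw [Filter.eventually_iff, Metric.mem_nhdsWithin_iff] at hev
  obtain ⟨δ, hδ, hδ'⟩ := hev
  -- final bound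
  have main : limsup (fun t => ENNReal.ofReal (|f t - f x| / ‖t - x‖)) (nhdsWithin x {x}ᶜ)
      ≤ ENNReal.ofReal (2 * M / r) := by
    refine Filter.limsup_le_of_le (by isBoundedDefault) ?_
    rw [Filter.eventually_iff, Metric.mem_nhdsWithin_iff]
    refine ⟨r * δ / 2, by positivity, fun y hy' => ?_⟩
    obtain ⟨hyd, hy⟩ := hy'
    have hyx : y ≠ x := fun h => hy (by simp [h])
    have hn : (0:ℝ) < ‖y - x‖ := by
      rw [norm_pos_iff]; exact sub_ne_zero.2 hyx
    set t : ℝ := 2 * ‖y - x‖ / r with htdef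
    have htpos : 0 < t := by positivity
    have htδ : |t| < δ := by
      rw [abs_of_pos htpos, htdef]
      rw [Metric.mem_ball, dist_eq_norm] at hyd
      rw [div_lt_iff₀ hr]
      nlinarith
    have htne : t ∈ ({(0:ℝ)}ᶜ : Set ℝ) := by
      simp [htpos.ne']
    have hdist : dist t 0 < δ := by rwa [Real.dist_eq, sub_zero]
    obtain ⟨hb1, hb2⟩ := hδ' ⟨Metric.mem_ball.2 hdist, htne⟩
    obtain ⟨hk1, hk2⟩ := key (y - x) (sub_ne_zero.2 hyx)
    -- monotonicity sandwich
    have hupper : f y ≤ f (x + t • e) := by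
      apply hmono
      have : (x + t • e) - y = t • e - (y - x) := by abel
      rw [this]; exact hk1
    have hlower : f (x + t • (-e)) ≤ f y := by
      apply hmono
      have : y - (x + t • (-e)) = t • e + (y - x) := by
        rw [smul_neg]; abel
      rw [this]; exact hk2
    have habs : |f y - f x| ≤ M * t := by
      rw [abs_le]
      rw [abs_of_pos htpos] at hb1 hb2
      constructor
      · have := abs_le.1 hb2
        linarith [this.1, hlower]
      · have := abs_le.1 hb1
        linarith [(abs_le.1 hb1).2, hupper]
    apply ENNReal.ofReal_le_ofReal
    rw [div_le_iff₀ hn]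
    have heq : M * t = 2 * M / r * ‖y - x‖ := by
      rw [htdef]; ring
    exact le_of_le_of_eq habs heq
  exact lt_of_le_of_lt main ENNReal.ofReal_lt_top
end

section
/- In an ordered normed linear space Y, the positive cone Y₊ is well-based (there is φ ∈ Y* with φ(u) ≥ ∥u∥ for all u ∈ Y₊) if and only if Y₊ has a bounded convex base B with 0 ∉ cl(B), where a base means that for each nonzero y ∈ Y₊ there is a unique λ > 0 with λy ∈ B. -/
theorem stmt_10 {Y : Type*} [NormedAddCommGroup Y] [NormedSpace ℝ Y] [PartialOrder Y]
    (hadd : ∀ x y z : Y, x ≤ y → x + z ≤ y + z)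
    (hsmul : ∀ (c : ℝ) (x y : Y), 0 ≤ c → x ≤ y → c • x ≤ c • y)
    (hconv : Convex ℝ {y : Y | 0 ≤ y}) :
    (∃ φ : Y →L[ℝ] ℝ, ∀ u : Y, 0 ≤ u → ‖u‖ ≤ φ u) ↔
      (∃ B : Set Y, B ⊆ {y : Y | 0 ≤ y} ∧ Convex ℝ B ∧ Bornology.IsBounded B ∧
        0 ∉ closure B ∧ ∀ y : Y, 0 ≤ y → y ≠ 0 → ∃! l : ℝ, 0 < l ∧ l • y ∈ B) := by
  constructor
  · rintro ⟨φ, hφ⟩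
    refine ⟨{y | 0 ≤ y} ∩ {y | φ y = 1}, Set.inter_subset_left, ?_, ?_, ?_, ?_⟩
    · exact hconv.inter (convex_hyperplane ((φ : Y →ₗ[ℝ] ℝ).isLinear) 1)
    · refine isBounded_iff_forall_norm_le.2 ⟨1, ?_⟩
      rintro y ⟨hy, hy1⟩
      calc ‖y‖ ≤ φ y := hφ y hy
        _ = 1 := hy1
    · intro h0
      have hcl : closure ({y : Y | 0 ≤ y} ∩ {y | φ y = 1}) ⊆ {y : Y | φ y = 1} := by
        refine closure_minimal ?_ (isClosed_eq φ.continuous continuous_const)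
        exact Set.inter_subset_right
      have := hcl h0
      simp at this
    · intro y hy hy0
      have ht : 0 < φ y := lt_of_lt_of_le (norm_pos_iff.2 hy0) (hφ y hy)
      refine ⟨(φ y)⁻¹, ⟨inv_pos.2 ht, ?_, ?_⟩, ?_⟩
      · have := hsmul (φ y)⁻¹ 0 y (le_of_lt (inv_pos.2 ht)) hy
        simpa using this
      · simp [inv_mul_cancel₀ ht.ne']
      · rintro l ⟨hl, -, hl1⟩
        have : l * φ y = 1 := by simpa using hl1
        field_simp
        linarith [this]
  · rintro ⟨B, hBsub, hBconv, hBbd, hB0, hBbase⟩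
    obtain ⟨M, hM⟩ := isBounded_iff_forall_norm_le.1 hBbd
    obtain ⟨f, u₀, hfa, hfb⟩ := geometric_hahn_banach_closed_point
      (hBconv.closure) isClosed_closure hB0
    have hu₀ : u₀ < 0 := by simpa using hfb
    set c : ℝ := -u₀ with hc
    have hcpos : 0 < c := by simp [hc]; linarith
    set C : ℝ := max M 1 with hC
    have hCpos : 0 < C := lt_of_lt_of_le one_pos (le_max_right _ _)
    refine ⟨(C / c) • (-f), ?_⟩
    intro v hv
    rcases eq_or_ne v 0 with rfl | hv0
    · simp
    · obtain ⟨l, ⟨hl, hlB⟩, -⟩ := hBbase v hv hv0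
      have h1 : c ≤ -f (l • v) := by
        have := hfa (l • v) (subset_closure hlB)
        show -u₀ ≤ -f (l • v)
        linarith
      have h2 : ‖l • v‖ ≤ C := le_trans (hM _ hlB) (le_max_left _ _)
      have h3 : l * ‖v‖ ≤ C := by
        rw [norm_smul, Real.norm_of_nonneg hl.le] at h2; exact h2
      have h4 : c ≤ l * (-f v) := by
        have hm : f (l • v) = l * f v := by simp
        rw [hm] at h1; linarith
      have key : ‖v‖ ≤ (C / c) * (-f v) := by
        rw [div_mul_eq_mul_div, le_div_iff₀ hcpos]
        calc ‖v‖ * c ≤ ‖v‖ * (l * (-f v)) := by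
              apply mul_le_mul_of_nonneg_left h4 (norm_nonneg v)
          _ = (l * ‖v‖) * (-f v) := by ring
          _ ≤ C * (-f v) := by
              apply mul_le_mul_of_nonneg_right h3
              nlinarith [norm_nonneg v, norm_pos_iff.2 hv0]
      simpa using key
end

section
/- Let X be a normed linear space with a norm ∥·∥ that is locally uniformly rotund at a point k ∈ X with ∥k∥ = 1, and suppose B(k, ε) ⊆ K for a convex cone K and some ε > 0. Let x* ∈ X* satisfy ∥x*∥ = x*(k) = 1. Then there exists α ∈ (0,1) such that the cone K_α := {x ∈ X : α∥x∥ < x*(x)} satisfies K_α ∩ S_X ⊆ B(k, ε/2), and hence K_α ⊆ int(K). -/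
open Filter Pointwise

theorem stmt_14 {X : Type*} [NormedAddCommGroup X] [NormedSpace ℝ X]
    (k : X) (hk : ‖k‖ = 1)
    (hLUR : ∀ x : ℕ → X, (∀ n, ‖x n‖ = 1) →
      Tendsto (fun n => ‖x n + k‖) atTop (nhds 2) → Tendsto x atTop (nhds k))
    (K : Set X) (hKcone : ∀ (c : ℝ) (x : X), 0 ≤ c → x ∈ K → c • x ∈ K)
    (hKconv : Convex ℝ K)
    (ε : ℝ) (hε : 0 < ε) (hball : Metric.closedBall k ε ⊆ K)
    (φ : X →L[ℝ] ℝ) (hφ : ‖φ‖ = 1) (hφk : φ k = 1) :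
    ∃ α : ℝ, α ∈ Set.Ioo (0 : ℝ) 1 ∧
      (∀ x : X, ‖x‖ = 1 → α * ‖x‖ < φ x → x ∈ Metric.closedBall k (ε / 2)) ∧
      {x : X | α * ‖x‖ < φ x} ⊆ interior K := by
  have hφle : ∀ y : X, φ y ≤ ‖y‖ := by
    intro y
    calc φ y ≤ ‖φ y‖ := le_abs_self _
    _ ≤ ‖φ‖ * ‖y‖ := φ.le_opNorm y
    _ = ‖y‖ := by rw [hφ, one_mul]
  have key : ∃ n : ℕ, ∀ x : X, ‖x‖ = 1 → 1 - 1/(n+1) < φ x → ‖x - k‖ ≤ ε/2 := by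
    by_contra h
    push_neg at h
    choose x hx1 hx2 hx3 using h
    have hup : ∀ n, ‖x n + k‖ ≤ 2 := by
      intro n
      calc ‖x n + k‖ ≤ ‖x n‖ + ‖k‖ := norm_add_le _ _
      _ = 2 := by rw [hx1, hk]; norm_num
    have hlow : ∀ n : ℕ, 2 - 1/(n+1) ≤ ‖x n + k‖ := by
      intro n
      have h1 : φ (x n + k) ≤ ‖x n + k‖ := hφle _
      have h2 : φ (x n + k) = φ (x n) + 1 := by rw [map_add, hφk]
      have := (hx2 n).le
      linarith
    have htend : Tendsto (fun n => ‖x n + k‖) atTop (nhds 2) := by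
      have h1 : Tendsto (fun n : ℕ => 2 - 1/((n:ℝ)+1)) atTop (nhds 2) := by
        have := tendsto_one_div_add_atTop_nhds_zero_nat (𝕜 := ℝ)
        have := (tendsto_const_nhds (x := (2:ℝ)) (f := atTop)).sub this
        simpa using this
      exact tendsto_of_tendsto_of_tendsto_of_le_of_le h1 tendsto_const_nhds
        hlow hup
    have hxk : Tendsto x atTop (nhds k) := hLUR x hx1 htend
    obtain ⟨N, hN⟩ := Metric.tendsto_atTop.mp hxk (ε/2) (by linarith)
    have := hN N le_rfl
    rw [dist_eq_norm] at this
    exact absurd this.le (not_le.mpr (hx3 N))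
  obtain ⟨n, hn⟩ := key
  set α : ℝ := max (1 - 1/(n+1)) (1/2) with hα
  have hα0 : 0 < α := lt_of_lt_of_le (by norm_num) (le_max_right _ _)
  have hα1 : α < 1 := by
    apply max_lt
    · have : (0:ℝ) < 1/(n+1) := by positivity
      linarith
    · norm_num
  have hsphere : ∀ x : X, ‖x‖ = 1 → α * ‖x‖ < φ x → x ∈ Metric.closedBall k (ε / 2) := by
    intro x hx hlt
    rw [hx, mul_one] at hlt
    have : 1 - 1/(n+1) < φ x := lt_of_le_of_lt (le_max_left _ _) hlt
    rw [Metric.mem_closedBall, dist_eq_norm]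
    exact hn x hx this
  refine ⟨α, ⟨hα0, hα1⟩, hsphere, ?_⟩
  -- interior containment
  have hballint : Metric.closedBall k (ε/2) ⊆ interior K := by
    intro y hy
    have : y ∈ Metric.ball k ε := by
      rw [Metric.mem_closedBall] at hy
      rw [Metric.mem_ball]
      linarith
    exact interior_mono (fun z hz => hball (Metric.ball_subset_closedBall hz))
      ((Metric.isOpen_ball.subset_interior_iff.mpr subset_rfl) this)
  intro x hx
  simp only [Set.mem_setOf_eq] at hx
  have hx0 : x ≠ 0 := by
    rintro rfl
    simp at hx
  have hc : (0:ℝ) < ‖x‖ := norm_pos_iff.mpr hx0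
  set u : X := ‖x‖⁻¹ • x with hu
  have hu1 : ‖u‖ = 1 := by
    rw [hu, norm_smul, norm_inv, norm_norm, inv_mul_cancel₀ hc.ne']
  have huφ : α * ‖u‖ < φ u := by
    rw [hu1, mul_one, hu, map_smul]
    have : α * ‖x‖ < φ x := hx
    calc α = ‖x‖⁻¹ * (α * ‖x‖) := by field_simp
    _ < ‖x‖⁻¹ * φ x := by
        apply mul_lt_mul_of_pos_left this (inv_pos.mpr hc)
    _ = ‖x‖⁻¹ • φ x := rfl
  have huint : u ∈ interior K := hballint (hsphere u hu1 huφ)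
  have hxu : x = ‖x‖ • u := by
    rw [hu, smul_smul, mul_inv_cancel₀ hc.ne', one_smul]
  have hsm : ‖x‖ • interior K ⊆ interior K := by
    rw [← interior_smul₀ hc.ne' K]
    exact interior_mono (by
      rintro z ⟨w, hw, rfl⟩
      exact hKcone _ _ hc.le hw)
  rw [hxu]
  exact hsm ⟨u, huint, rfl⟩
end

section
/- Suppose D ⊆ X is a set such that (x − K_α) ∩ D = ∅ for every x ∈ D, where K_α = {x : α∥x∥ < x*(x)} for some α ∈ (0,1) and x* ∈ X* with ∥x*∥ = x*(k) = 1 for some k ∈ X, ∥k∥ = 1. Then the projection π : D → ker(x*) given by π(x) = x − x*(x)k is injective, and the function g : π(D) → ℝ defined by g(π(x)) = x*(x) is Lipschitz with constant 1/(1−α); consequently D is contained in a Lipschitz hypersurface. -/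
/-- `M` is a Lipschitz hypersurface. -/
def IsLipschitzHypersurface {X : Type*} [NormedAddCommGroup X] [NormedSpace ℝ X]
    (M : Set X) : Prop :=
  ∃ (φ : X →L[ℝ] ℝ) (v : X) (f : X → ℝ) (C : NNReal), v ≠ 0 ∧
    LipschitzOnWith C f {y : X | φ y = 0} ∧
    M = {z : X | ∃ y : X, φ y = 0 ∧ z = y + f y • v}

theorem stmt_15 {X : Type*} [NormedAddCommGroup X] [NormedSpace ℝ X]
    (α : ℝ) (hα : α ∈ Set.Ioo (0 : ℝ) 1)
    (k : X) (hk : ‖k‖ = 1)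
    (φ : X →L[ℝ] ℝ) (hφ : ‖φ‖ = 1) (hφk : φ k = 1)
    (D : Set X)
    (hD : ∀ x ∈ D, ∀ d ∈ D, ¬ (α * ‖x - d‖ < φ (x - d))) :
    (∀ x ∈ D, ∀ y ∈ D, x - φ x • k = y - φ y • k → x = y) ∧
    (∀ x ∈ D, ∀ y ∈ D,
      |φ x - φ y| ≤ (1 / (1 - α)) * ‖(x - φ x • k) - (y - φ y • k)‖) ∧
    (∃ L : Set X, IsLipschitzHypersurface L ∧ D ⊆ L) := by
  classical
  obtain ⟨hα0, hα1⟩ := hα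
  have h1α : (0:ℝ) < 1 - α := by linarith
  -- key Lipschitz estimate
  have key : ∀ x ∈ D, ∀ y ∈ D,
      |φ x - φ y| ≤ (1 / (1 - α)) * ‖(x - φ x • k) - (y - φ y • k)‖ := by
    intro x hx y hy
    set t : ℝ := φ x - φ y with ht
    set u : X := (x - φ x • k) - (y - φ y • k) with hu
    have hxy : x - y = u + t • k := by rw [hu, ht]; module
    have h1 : φ (x - y) ≤ α * ‖x - y‖ := le_of_not_gt (hD x hx y hy)
    have h2 : φ (y - x) ≤ α * ‖y - x‖ := le_of_not_gt (hD y hy x hx)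
    have e1 : φ (x - y) = t := by rw [map_sub]
    have e2 : φ (y - x) = -t := by rw [map_sub]; rw [ht]; ring
    have e3 : ‖y - x‖ = ‖x - y‖ := norm_sub_rev _ _
    have habs : |t| ≤ α * ‖x - y‖ := by
      rw [abs_le]; constructor <;> [nlinarith [h2, e2, e3]; nlinarith [h1, e1]]
    have hnorm : ‖x - y‖ ≤ ‖u‖ + |t| := by
      rw [hxy]
      calc ‖u + t • k‖ ≤ ‖u‖ + ‖t • k‖ := norm_add_le _ _
        _ = ‖u‖ + |t| := by rw [norm_smul, hk, Real.norm_eq_abs, mul_one]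
    rw [div_mul_eq_mul_div, one_mul, le_div_iff₀ h1α]
    nlinarith [norm_nonneg u, abs_nonneg t]
  -- injectivity
  have inj : ∀ x ∈ D, ∀ y ∈ D, x - φ x • k = y - φ y • k → x = y := by
    intro x hx y hy h
    have h0 : φ x = φ y := by
      have := key x hx y hy
      rw [h, sub_self, norm_zero, mul_zero] at this
      have := abs_nonpos_iff.mp (le_antisymm this (abs_nonneg _)).le
      linarith [sub_eq_zero.mp this]
    rw [h0] at h
    exact sub_left_injective h
  refine ⟨inj, key, ?_⟩
  -- hypersurface
  set C : NNReal := ⟨1 / (1 - α), by positivity⟩ with hC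
  set S : Set X := (fun x => x - φ x • k) '' D with hS
  set f₀ : X → ℝ := fun z =>
    if h : ∃ x, x ∈ D ∧ x - φ x • k = z then φ h.choose else 0 with hf₀def
  have hf₀ : ∀ x ∈ D, f₀ (x - φ x • k) = φ x := by
    intro x hx
    have hex : ∃ x', x' ∈ D ∧ x' - φ x' • k = x - φ x • k := ⟨x, hx, rfl⟩
    simp only [hf₀def, dif_pos hex]
    obtain ⟨hmem, heq⟩ := hex.choose_spec
    rw [inj _ hmem _ hx heq]
  have hlip : LipschitzOnWith C f₀ S := by
    rw [lipschitzOnWith_iff_dist_le_mul]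
    rintro z ⟨x, hx, rfl⟩ w ⟨y, hy, rfl⟩
    rw [hf₀ x hx, hf₀ y hy]
    have : (C : ℝ) = 1 / (1 - α) := rfl
    rw [Real.dist_eq, dist_eq_norm, this]
    exact key x hx y hy
  obtain ⟨g, hg, heq⟩ := hlip.extend_real
  refine ⟨{z : X | ∃ y : X, φ y = 0 ∧ z = y + g y • k}, ⟨φ, k, g, C, ?_, ?_, rfl⟩, ?_⟩
  · intro h; rw [h, norm_zero] at hk; norm_num at hk
  · exact hg.lipschitzOnWith
  · intro x hx
    refine ⟨x - φ x • k, ?_, ?_⟩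
    · simp [hφk]
    · have : g (x - φ x • k) = φ x := by
        rw [← heq ⟨x, hx, rfl⟩, hf₀ x hx]
      rw [this]; module
end

section
/- There exists a mapping f : ℝ → ℓ₂ that is (ℝ₊, K)-increasing, where K is the non-negative cone of ℓ₂ (coordinatewise non-negative sequences), but f is nowhere differentiable. -/
open scoped ENNReal

noncomputable section

/-- half to the n -/
def ND.c (n : ℕ) : ℝ := (2:ℝ)⁻¹ ^ n

lemma ND.c_pos (n : ℕ) : 0 < ND.c n := by
  show (0:ℝ) < (2:ℝ)⁻¹ ^ n
  positivity

lemma ND.c_le_one (n : ℕ) : ND.c n ≤ 1 :=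
  pow_le_one₀ (by norm_num) (by norm_num)

/-- the basic jump function for coordinate (n, k): jump of size c n at k * c n,
normalized so that its value at 0 is 0. -/
def ND.g (n : ℕ) (k : ℤ) (t : ℝ) : ℝ :=
  ND.c n * ((if (k:ℝ) * ND.c n ≤ t then (1:ℝ) else 0) -
            (if (k:ℝ) * ND.c n ≤ 0 then (1:ℝ) else 0))

lemma ND.g_mono (n : ℕ) (k : ℤ) {s t : ℝ} (h : s ≤ t) : ND.g n k s ≤ ND.g n k t := by
  unfold ND.g
  have : (if (k:ℝ) * ND.c n ≤ s then (1:ℝ) else 0) ≤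
      (if (k:ℝ) * ND.c n ≤ t then (1:ℝ) else 0) := by
    split_ifs with h1 h2 h2 <;> norm_num
    exact h2 (h1.trans h)
  nlinarith [ND.c_pos n]

lemma ND.abs_g_le (n : ℕ) (k : ℤ) (t : ℝ) : |ND.g n k t| ≤ ND.c n := by
  unfold ND.g
  have h1 : |(if (k:ℝ) * ND.c n ≤ t then (1:ℝ) else 0) -
      (if (k:ℝ) * ND.c n ≤ 0 then (1:ℝ) else 0)| ≤ 1 := by
    split_ifs <;> norm_num
  rw [abs_mul, abs_of_pos (ND.c_pos n)]
  nlinarith [ND.c_pos n]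

lemma ND.g_eq_zero (n : ℕ) (k : ℤ) (t : ℝ) (h : |t| < |(k:ℝ) * ND.c n|) :
    ND.g n k t = 0 := by
  unfold ND.g
  have habs := abs_lt.1 h
  rcases le_or_gt ((k:ℝ) * ND.c n) 0 with hk | hk
  · rw [abs_of_nonpos hk] at habs
    rw [if_pos hk, if_pos (by linarith [habs.1] : (k:ℝ) * ND.c n ≤ t)]
    ring
  · rw [abs_of_pos hk] at habs
    rw [if_neg (by linarith : ¬ (k:ℝ) * ND.c n ≤ 0),
      if_neg (by linarith [habs.2] : ¬ (k:ℝ) * ND.c n ≤ t)]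
    ring

/-- the index equivalence -/
def ND.e : ℕ × ℤ ≃ ℕ := Denumerable.eqv (ℕ × ℤ)

/-- the summability of squares, over the product index -/
lemma ND.summable_sq (t : ℝ) : Summable (fun q : ℕ × ℤ => ‖ND.g q.1 q.2 t‖ ^ (2:ℝ)) := by
  have hnn : 0 ≤ fun q : ℕ × ℤ => ‖ND.g q.1 q.2 t‖ ^ (2:ℝ) := by
    intro q
    positivity
  rw [summable_prod_of_nonneg hnn]
  constructor
  · intro n
    apply summable_of_ne_finset_zero (s := Finset.Icc (-⌊|t| / ND.c n⌋) ⌊|t| / ND.c n⌋)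
    intro k hk
    have hz : ND.g n k t = 0 := by
      apply ND.g_eq_zero
      rw [Finset.mem_Icc, not_and_or] at hk
      have hcn := ND.c_pos n
      rcases hk with hk | hk
      · push_neg at hk
        have hkZ : ⌊|t| / ND.c n⌋ < -k := by omega
        have h1 : |t| / ND.c n < ((-k : ℤ) : ℝ) := Int.floor_lt.mp hkZ
        have h1' : |t| / ND.c n < -(k:ℝ) := by push_cast at h1; linarith
        have h2 : |t| < -(k : ℝ) * ND.c n := by
          rw [div_lt_iff₀ hcn] at h1'; linarith
        calc |t| < -(k:ℝ) * ND.c n := h2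
          _ ≤ |(k:ℝ) * ND.c n| := by rw [abs_mul, abs_of_pos hcn]; nlinarith [neg_abs_le (k:ℝ)]
      · push_neg at hk
        have h1 : |t| / ND.c n < ((k : ℤ) : ℝ) := Int.floor_lt.mp hk
        have h2 : |t| < (k : ℝ) * ND.c n := by
          rw [div_lt_iff₀ hcn] at h1; push_cast at h1 ⊢; nlinarith
        calc |t| < (k:ℝ) * ND.c n := h2
          _ ≤ |(k:ℝ) * ND.c n| := le_abs_self _
    rw [hz]
    simp
  · apply Summable.of_nonneg_of_le (f := fun n => (2 * |t| + 1) * ND.c n)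
    · intro n
      exact tsum_nonneg (fun k => by positivity)
    · intro n
      set s : Finset ℤ := Finset.Icc (-⌊|t| / ND.c n⌋) ⌊|t| / ND.c n⌋ with hs
      have hcn := ND.c_pos n
      have hzero : ∀ k ∉ s, ‖ND.g n k t‖ ^ (2:ℝ) = 0 := by
        intro k hk
        have hz : ND.g n k t = 0 := by
          apply ND.g_eq_zero
          rw [hs, Finset.mem_Icc, not_and_or] at hk
          rcases hk with hk | hk
          · push_neg at hk
            have hkZ : ⌊|t| / ND.c n⌋ < -k := by omega
            have h1 : |t| / ND.c n < ((-k : ℤ) : ℝ) := Int.floor_lt.mp hkZ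
            have h1' : |t| / ND.c n < -(k:ℝ) := by push_cast at h1; linarith
            have h2 : |t| < -(k : ℝ) * ND.c n := by
              rw [div_lt_iff₀ hcn] at h1'; linarith
            calc |t| < -(k:ℝ) * ND.c n := h2
              _ ≤ |(k:ℝ) * ND.c n| := by rw [abs_mul, abs_of_pos hcn]; nlinarith [neg_abs_le (k:ℝ)]
          · push_neg at hk
            have h1 : |t| / ND.c n < ((k : ℤ) : ℝ) := Int.floor_lt.mp hk
            have h2 : |t| < (k : ℝ) * ND.c n := by
              rw [div_lt_iff₀ hcn] at h1; push_cast at h1 ⊢; nlinarith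
            calc |t| < (k:ℝ) * ND.c n := h2
              _ ≤ |(k:ℝ) * ND.c n| := le_abs_self _
        rw [hz]; simp
      calc ∑' k : ℤ, ‖ND.g n k t‖ ^ (2:ℝ) = ∑ k ∈ s, ‖ND.g n k t‖ ^ (2:ℝ) :=
            tsum_eq_sum hzero
        _ ≤ ∑ k ∈ s, (ND.c n)^(2:ℝ) := by
            apply Finset.sum_le_sum
            intro k _
            have h1 := ND.abs_g_le n k t
            have h2 : ‖ND.g n k t‖ ≤ ND.c n := h1
            have h3 : (0:ℝ) ≤ ‖ND.g n k t‖ := norm_nonneg _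
            rw [Real.rpow_two, Real.rpow_two]
            nlinarith
        _ = s.card * (ND.c n)^(2:ℝ) := by rw [Finset.sum_const, nsmul_eq_mul]
        _ ≤ (2 * (|t| / ND.c n) + 1) * (ND.c n)^(2:ℝ) := by
            apply mul_le_mul_of_nonneg_right _ (by positivity)
            have hfl : (0:ℤ) ≤ ⌊|t| / ND.c n⌋ := Int.floor_nonneg.2 (by positivity)
            have hcard : s.card = (⌊|t| / ND.c n⌋ + 1 - (-⌊|t| / ND.c n⌋)).toNat := by
              rw [hs, Int.card_Icc]
            have hcard2 : (s.card : ℝ) = 2 * (⌊|t| / ND.c n⌋ : ℝ) + 1 := by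
              rw [hcard]
              have : (⌊|t| / ND.c n⌋ + 1 - (-⌊|t| / ND.c n⌋)) = 2 * ⌊|t| / ND.c n⌋ + 1 := by
                ring
              rw [this]
              have h3 : (0:ℤ) ≤ 2 * ⌊|t| / ND.c n⌋ + 1 := by omega
              have h5 : ((2 * ⌊|t| / ND.c n⌋ + 1).toNat : ℤ) = 2 * ⌊|t| / ND.c n⌋ + 1 :=
                Int.toNat_of_nonneg h3
              exact_mod_cast h5
            rw [hcard2]
            have := Int.floor_le (|t| / ND.c n)
            linarith
        _ ≤ (2 * |t| + 1) * ND.c n := by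
            rw [Real.rpow_two]
            have h1 : ND.c n ≤ 1 := ND.c_le_one n
            have h2 : 0 ≤ |t| := abs_nonneg t
            have h4 : (2 * (|t| / ND.c n) + 1) * ND.c n ^ 2 = (2 * |t| + ND.c n) * ND.c n := by
              field_simp
            rw [h4]
            nlinarith
    · apply Summable.mul_left
      exact summable_geometric_of_lt_one (by norm_num) (by norm_num)

/-- the function, as a bare function -/
def ND.F (t : ℝ) : ℕ → ℝ := fun m => ND.g (ND.e.symm m).1 (ND.e.symm m).2 t

lemma ND.memF (t : ℝ) : Memℓp (ND.F t) 2 := by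
  apply memℓp_gen
  have h2 : ((2:ℝ≥0∞)).toReal = (2:ℝ) := by simp
  rw [h2]
  have := (ND.e.symm.summable_iff
    (f := fun q : ℕ × ℤ => ‖ND.g q.1 q.2 t‖ ^ (2:ℝ))).2 (ND.summable_sq t)
  exact this

/-- the lp element -/
def ND.f (t : ℝ) : lp (fun _ : ℕ => ℝ) 2 := ⟨ND.F t, ND.memF t⟩

set_option maxHeartbeats 1000000 in
theorem stmt_17 :
    ∃ f : ℝ → lp (fun _ : ℕ => ℝ) 2,
      (∀ s t : ℝ, s ≤ t → ∀ n : ℕ, f s n ≤ f t n) ∧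
      ∀ x : ℝ, ¬ DifferentiableAt ℝ f x := by
  refine ⟨ND.f, ?_, ?_⟩
  · intro s t hst m
    exact ND.g_mono _ _ hst
  · intro x hd
    set L := fderiv ℝ ND.f x with hL
    have hlo := (hd.hasFDerivAt.isLittleO).def (by norm_num : (0:ℝ) < 1/4)
    rw [Metric.eventually_nhds_iff] at hlo
    obtain ⟨δ, hδ, hball⟩ := hlo
    -- choose n with c n < δ
    obtain ⟨n, hn⟩ := exists_pow_lt_of_lt_one hδ (by norm_num : (2:ℝ)⁻¹ < 1)
    have hcn : ND.c n < δ := hn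
    have hcpos := ND.c_pos n
    set k : ℤ := ⌊x / ND.c n⌋ + 1 with hk
    set p : ℝ := (k:ℝ) * ND.c n with hp
    have hxp : x < p := by
      rw [hp, hk]
      have := Int.lt_floor_add_one (x / ND.c n)
      have h2 : x / ND.c n * ND.c n < ((⌊x / ND.c n⌋ : ℝ) + 1) * ND.c n := by
        apply mul_lt_mul_of_pos_right _ hcpos
        exact_mod_cast this
      rw [div_mul_cancel₀ x (ne_of_gt hcpos)] at h2
      push_cast
      linarith
    have hpx : p - x ≤ ND.c n := by
      rw [hp, hk]
      have := Int.floor_le (x / ND.c n)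
      have h2 : ((⌊x / ND.c n⌋ : ℝ)) * ND.c n ≤ x / ND.c n * ND.c n := by
        apply mul_le_mul_of_nonneg_right this (le_of_lt hcpos)
      rw [div_mul_cancel₀ x (ne_of_gt hcpos)] at h2
      push_cast
      nlinarith
    -- key jump lower bound
    have key : ∀ u : ℝ, x ≤ u → u < p → ND.c n ≤ ‖ND.f p - ND.f u‖ := by
      intro u hxu hup
      set m₀ : ℕ := ND.e (n, k) with hm₀
      have happ : (ND.f p - ND.f u) m₀ = ND.c n := by
        have hcoe : (ND.f p - ND.f u) m₀ = ND.f p m₀ - ND.f u m₀ := rfl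
        rw [hcoe]
        have hsymm : ND.e.symm (ND.e (n, k)) = (n, k) := Equiv.symm_apply_apply _ _
        have hgm : ∀ t, (ND.f t) m₀ = ND.g n k t := by
          intro t
          show ND.F t m₀ = ND.g n k t
          simp only [ND.F, hm₀, hsymm]
        rw [hgm, hgm]
        unfold ND.g
        have h1 : ((k:ℝ) * ND.c n ≤ p) := hp.ge
        have h2 : ¬ ((k:ℝ) * ND.c n ≤ u) := by rw [← hp]; exact not_le.2 hup
        rw [if_pos h1, if_neg h2]
        ring
      calc ND.c n = |(ND.f p - ND.f u) m₀| := by rw [happ, abs_of_pos hcpos]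
        _ = ‖(ND.f p - ND.f u) m₀‖ := rfl
        _ ≤ ‖ND.f p - ND.f u‖ := lp.norm_apply_le_norm two_ne_zero _ _
    -- main estimate for arbitrary η > 0
    have main : ∀ η : ℝ, 0 < η → ND.c n ≤ 2 * (1/4) * ND.c n + ‖L‖ * η := by
      intro η hη
      set u : ℝ := max x (p - η) with hu
      have hxu : x ≤ u := le_max_left _ _
      have hup : u < p := max_lt hxp (by linarith)
      have hpu : p - u ≤ η := by
        have : p - η ≤ u := le_max_right _ _
        linarith
      have hdu : dist u x < δ := by
        rw [Real.dist_eq, abs_of_nonneg (by linarith : (0:ℝ) ≤ u - x)]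
        linarith
      have hdp : dist p x < δ := by
        rw [Real.dist_eq, abs_of_pos (by linarith : (0:ℝ) < p - x)]
        linarith
      have hbu := hball hdu
      have hbp := hball hdp
      have hnu : ‖ND.f u - ND.f x - L (u - x)‖ ≤ 1/4 * ND.c n := by
        refine le_trans hbu ?_
        rw [Real.norm_eq_abs, abs_of_nonneg (by linarith : (0:ℝ) ≤ u - x)]
        nlinarith
      have hnp : ‖ND.f p - ND.f x - L (p - x)‖ ≤ 1/4 * ND.c n := by
        refine le_trans hbp ?_
        rw [Real.norm_eq_abs, abs_of_pos (by linarith : (0:ℝ) < p - x)]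
        nlinarith
      have hLn : ‖L (p - u)‖ ≤ ‖L‖ * η := by
        refine le_trans (L.le_opNorm _) ?_
        apply mul_le_mul_of_nonneg_left _ (norm_nonneg L)
        rw [Real.norm_eq_abs, abs_of_pos (by linarith : (0:ℝ) < p - u)]
        exact hpu
      have hdecomp : ND.f p - ND.f u =
          (ND.f p - ND.f x - L (p - x)) - (ND.f u - ND.f x - L (u - x)) + L (p - u) := by
        have : L (p - u) = L (p - x) - L (u - x) := by
          rw [← map_sub]
          congr 1
          ring
        rw [this]
        abel
      have htri : ‖ND.f p - ND.f u‖ ≤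
          ‖ND.f p - ND.f x - L (p - x)‖ + ‖ND.f u - ND.f x - L (u - x)‖ + ‖L (p - u)‖ := by
        rw [hdecomp]
        refine le_trans (norm_add_le _ _) ?_
        have := norm_sub_le (ND.f p - ND.f x - L (p - x)) (ND.f u - ND.f x - L (u - x))
        linarith
      have hk2 := key u hxu hup
      linarith
    have hfin := main (ND.c n / (4 * (‖L‖ + 1))) (by positivity)
    have hLpos : (0:ℝ) ≤ ‖L‖ := norm_nonneg L
    have hterm : ‖L‖ * (ND.c n / (4 * (‖L‖ + 1))) ≤ ND.c n / 4 := by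
      have h0 : (0:ℝ) < ‖L‖ + 1 := by linarith
      have hq : (0:ℝ) ≤ ND.c n / (4 * (‖L‖ + 1)) := by positivity
      have hsplit : ND.c n / (4 * (‖L‖ + 1)) = (ND.c n / 4) / (‖L‖ + 1) := by
        rw [div_div]
      calc ‖L‖ * (ND.c n / (4 * (‖L‖ + 1)))
          ≤ (‖L‖ + 1) * (ND.c n / (4 * (‖L‖ + 1))) := by nlinarith
        _ = ND.c n / 4 := by
            rw [hsplit, mul_div_cancel₀ _ (ne_of_gt h0)]
    linarith

end
end

section
/- There exist a positive sequence (aₙ) and an increasing sequence (mₙ) of natural numbers such that Σₙ aₙ² < ∞ and Σ_{j=mₙ}^{mₙ₊₁−1} aⱼ = 2n for every n ≥ 1. -/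
noncomputable def aSeq (j : ℕ) : ℝ :=
  if j < 2 then 1 else 2 * (Nat.log 2 j : ℝ) / 2 ^ (Nat.log 2 j)

lemma aSeq_eq_on_block {n j : ℕ} (hn : 1 ≤ n) (hj : j ∈ Finset.Ico (2 ^ n) (2 ^ (n + 1))) :
    aSeq j = 2 * n / 2 ^ n := by
  rw [Finset.mem_Ico] at hj
  have hlog : Nat.log 2 j = n := Nat.log_eq_of_pow_le_of_lt_pow hj.1 hj.2
  have h2n : 2 ≤ 2 ^ n := by
    calc 2 = 2 ^ 1 := (pow_one 2).symm
    _ ≤ 2 ^ n := Nat.pow_le_pow_right (by norm_num) hn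
  have h2 : ¬ j < 2 := by omega
  simp [aSeq, h2, hlog]

lemma aSeq_pos (j : ℕ) : 0 < aSeq j := by
  unfold aSeq
  split
  · norm_num
  · rename_i h
    have hj : 2 ≤ j := by omega
    have hlog : 1 ≤ Nat.log 2 j := Nat.le_log_of_pow_le (by norm_num) (by simpa using hj)
    have : (0:ℝ) < (Nat.log 2 j : ℝ) := by exact_mod_cast hlog
    positivity

lemma block_sum (n : ℕ) (hn : 1 ≤ n) :
    ∑ j ∈ Finset.Ico (2 ^ n) (2 ^ (n + 1)), aSeq j = 2 * n := by
  rw [Finset.sum_congr rfl (fun j hj => aSeq_eq_on_block hn hj), Finset.sum_const,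
    Nat.card_Ico]
  have h : 2 ^ (n + 1) - 2 ^ n = 2 ^ n := by
    have h2 : 2 ^ (n + 1) = 2 ^ n * 2 := pow_succ 2 n
    omega
  rw [h, nsmul_eq_mul]
  have h2 : (0:ℝ) < 2 ^ n := by positivity
  push_cast
  field_simp

lemma block_sum_sq (n : ℕ) (hn : 1 ≤ n) :
    ∑ j ∈ Finset.Ico (2 ^ n) (2 ^ (n + 1)), (aSeq j) ^ 2 = 4 * n ^ 2 * (1 / 2) ^ n := by
  rw [Finset.sum_congr rfl (fun j hj => by rw [aSeq_eq_on_block hn hj]), Finset.sum_const,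
    Nat.card_Ico]
  have h : 2 ^ (n + 1) - 2 ^ n = 2 ^ n := by
    have h2 : 2 ^ (n + 1) = 2 ^ n * 2 := pow_succ 2 n
    omega
  rw [h, nsmul_eq_mul]
  have h2 : (0:ℝ) < 2 ^ n := by positivity
  push_cast
  field_simp
  ring_nf
  rw [← mul_pow]
  norm_num

lemma partial_bound (N : ℕ) :
    ∑ j ∈ Finset.range (2 ^ N), (aSeq j) ^ 2 ≤ 2 + ∑ n ∈ Finset.range N, 4 * (n:ℝ) ^ 2 * (1 / 2) ^ n := by
  induction N with
  | zero =>
    simp [aSeq]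
  | succ N ih =>
    have hsplit : ∑ j ∈ Finset.range (2 ^ (N + 1)), (aSeq j) ^ 2 =
        ∑ j ∈ Finset.range (2 ^ N), (aSeq j) ^ 2
          + ∑ j ∈ Finset.Ico (2 ^ N) (2 ^ (N + 1)), (aSeq j) ^ 2 := by
      rw [Finset.range_eq_Ico,
        ← Finset.sum_Ico_consecutive _ (Nat.zero_le (2^N))
          (Nat.pow_le_pow_right (by norm_num) (by omega)), ← Finset.range_eq_Ico]
    rw [hsplit, Finset.sum_range_succ]
    rcases Nat.eq_zero_or_pos N with h0 | hpos
    · subst h0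
      norm_num [aSeq, Finset.sum_Ico_eq_sum_range]
    · rw [block_sum_sq N hpos]
      linarith [ih]

theorem stmt_19 :
    ∃ (a : ℕ → ℝ) (m : ℕ → ℕ), (∀ n, 0 < a n) ∧ StrictMono m ∧
      Summable (fun n => (a n) ^ 2) ∧
      ∀ n : ℕ, 1 ≤ n → ∑ j ∈ Finset.Ico (m n) (m (n + 1)), a j = 2 * n := by
  refine ⟨aSeq, fun n => 2 ^ n, aSeq_pos, ?_, ?_, fun n hn => block_sum n hn⟩
  · exact fun i j h => Nat.pow_lt_pow_right (by norm_num) h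
  · have hg : Summable (fun n : ℕ => 4 * (n:ℝ) ^ 2 * (1 / 2) ^ n) := by
      have := summable_pow_mul_geometric_of_norm_lt_one (R := ℝ) 2 (r := 1/2) (by norm_num)
      simpa [mul_comm, mul_assoc, mul_left_comm] using this.mul_left 4
    apply summable_of_sum_range_le (c := 2 + ∑' n : ℕ, 4 * (n:ℝ) ^ 2 * (1 / 2) ^ n)
      (fun j => sq_nonneg _)
    intro N
    calc ∑ j ∈ Finset.range N, (aSeq j) ^ 2
        ≤ ∑ j ∈ Finset.range (2 ^ N), (aSeq j) ^ 2 := by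
          apply Finset.sum_le_sum_of_subset_of_nonneg
          · exact Finset.range_subset_range.2 (Nat.le_of_lt (Nat.lt_two_pow_self (n := N)))
          · exact fun j _ _ => sq_nonneg _
      _ ≤ 2 + ∑ n ∈ Finset.range N, 4 * (n:ℝ) ^ 2 * (1 / 2) ^ n := partial_bound N
      _ ≤ 2 + ∑' n : ℕ, 4 * (n:ℝ) ^ 2 * (1 / 2) ^ n := by
          gcongr
          exact Summable.sum_le_tsum _ (fun n _ => by positivity) hg
end
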